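/- arXiv:2401.09108 — 7 statements merged into one kernel-verified Lean document; each statement's English description precedes it below -/
import Mathlib

section
/- Let ω(x) = (2πσ₁²)⁻¹ e^{−|x|²/(2σ₁²)} − κ(2πσ₂²)⁻¹ e^{−|x|²/(2σ₂²)} on ℝ² with 0 < σ₁ < σ₂, κ > 0 and σ₁√κ < σ₂. Then the L¹-norm of ω equals ‖ω‖₁ = (1 − κ) + 2(κ e^{−Θ²/(2σ₂²)} − e^{−Θ²/(2σ₁²)}), where Θ = σ₁σ₂ sqrt( 2 log(σ₂²/(κσ₁²)) / (σ₂² − σ₁²) ). -/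
open MeasureTheory Real Set

lemma hasDerivAt_aux (a y : ℝ) (ha : 0 < a) :
    HasDerivAt (fun y : ℝ => -Real.exp (-a * y ^ 2) / (2 * a))
      (y * Real.exp (-a * y ^ 2)) y := by
  have h1 : HasDerivAt (fun y : ℝ => -a * y ^ 2) (-a * (2 * y)) y := by
    simpa using ((hasDerivAt_pow 2 y).const_mul (-a))
  have h2 := (h1.exp).neg.div_const (2 * a)
  refine h2.congr_deriv ?_
  rw [div_eq_iff (by positivity)]
  ring

lemma tendsto_aux (a : ℝ) (ha : 0 < a) :
    Filter.Tendsto (fun y : ℝ => -Real.exp (-a * y ^ 2) / (2 * a)) Filter.atTop (nhds 0) := by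
  have h : Filter.Tendsto (fun y : ℝ => -a * y ^ 2) Filter.atTop Filter.atBot := by
    apply Filter.Tendsto.const_mul_atTop_of_neg (neg_neg_iff_pos.mpr ha)
    exact Filter.tendsto_pow_atTop (by norm_num)
  have := (Real.tendsto_exp_atBot.comp h).neg.div_const (2 * a)
  simpa using this

lemma integrableOn_aux (a c : ℝ) (ha : 0 < a) (hc : 0 ≤ c) :
    IntegrableOn (fun y => y * Real.exp (-a * y ^ 2)) (Ioi c) := by
  refine integrableOn_Ioi_deriv_of_nonneg' (g := fun y => -Real.exp (-a * y ^ 2) / (2 * a))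
    (fun x _ => hasDerivAt_aux a x ha) (fun x hx => ?_) (tendsto_aux a ha)
  exact mul_nonneg (hc.trans hx.out.le) (Real.exp_nonneg _)

lemma integral_Ioi_aux (a c : ℝ) (ha : 0 < a) (hc : 0 ≤ c) :
    ∫ y in Ioi c, y * Real.exp (-a * y ^ 2) = Real.exp (-a * c ^ 2) / (2 * a) := by
  rw [integral_Ioi_of_hasDerivAt_of_nonneg' (fun x _ => hasDerivAt_aux a x ha)
    (fun x hx => mul_nonneg (hc.trans hx.out.le) (Real.exp_nonneg _)) (tendsto_aux a ha)]
  ring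

lemma integral_Ioc_aux (a T : ℝ) (ha : 0 < a) (hT : 0 ≤ T) :
    ∫ y in Ioc 0 T, y * Real.exp (-a * y ^ 2) = (1 - Real.exp (-a * T ^ 2)) / (2 * a) := by
  have hcont : Continuous fun y : ℝ => y * Real.exp (-a * y ^ 2) := by
    continuity
  rw [← intervalIntegral.integral_of_le hT]
  rw [intervalIntegral.integral_eq_sub_of_hasDerivAt (fun x _ => hasDerivAt_aux a x ha)
    (hcont.intervalIntegrable 0 T)]
  simp
  ring

lemma radial_aux (g : ℝ → ℝ) :
    ∫ x : EuclideanSpace ℝ (Fin 2), g ‖x‖ = 2 * π * ∫ y in Ioi (0:ℝ), y * g y := by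
  rw [MeasureTheory.integral_fun_norm_addHaar volume g]
  have hd : Module.finrank ℝ (EuclideanSpace ℝ (Fin 2)) = 2 := by
    simp [finrank_euclideanSpace]
  rw [hd]
  have hv : (volume (Metric.ball (0 : EuclideanSpace ℝ (Fin 2)) 1)).toReal = π := by
    rw [EuclideanSpace.volume_ball]
    simp only [Fintype.card_fin]
    rw [show ((2:ℕ):ℝ) / 2 + 1 = 2 by norm_num, Real.Gamma_two]
    rw [ENNReal.toReal_mul]
    simp [Real.sq_sqrt Real.pi_nonneg, ENNReal.toReal_ofReal Real.pi_nonneg]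
  rw [measureReal_def, hv]
  simp only [pow_one, smul_eq_mul, nsmul_eq_mul]
  push_cast
  simp only [pow_one]
  ring

set_option maxHeartbeats 1000000 in
/-- Explicit value of the `L¹`-norm of the 2D DoG kernel. -/
theorem stmt2 (σ₁ σ₂ κ : ℝ) (hσ₁ : 0 < σ₁) (hσ₁₂ : σ₁ < σ₂) (hκ : 0 < κ)
    (hκσ : σ₁ * Real.sqrt κ < σ₂)
    (ω : EuclideanSpace ℝ (Fin 2) → ℝ)
    (hω : ∀ x, ω x = (2 * π * σ₁ ^ 2)⁻¹ * Real.exp (-‖x‖ ^ 2 / (2 * σ₁ ^ 2))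
      - κ * (2 * π * σ₂ ^ 2)⁻¹ * Real.exp (-‖x‖ ^ 2 / (2 * σ₂ ^ 2)))
    (Θ : ℝ)
    (hΘ : Θ = σ₁ * σ₂ * Real.sqrt (2 * Real.log (σ₂ ^ 2 / (κ * σ₁ ^ 2)) / (σ₂ ^ 2 - σ₁ ^ 2))) :
    ∫ x, |ω x| = (1 - κ)
      + 2 * (κ * Real.exp (-Θ ^ 2 / (2 * σ₂ ^ 2)) - Real.exp (-Θ ^ 2 / (2 * σ₁ ^ 2))) := by
  have hσ₂ : 0 < σ₂ := hσ₁.trans hσ₁₂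
  have hπ := Real.pi_pos
  set a : ℝ := (2 * σ₁ ^ 2)⁻¹ with ha_def
  set b : ℝ := (2 * σ₂ ^ 2)⁻¹ with hb_def
  set A : ℝ := (2 * π * σ₁ ^ 2)⁻¹ with hA_def
  set B : ℝ := κ * (2 * π * σ₂ ^ 2)⁻¹ with hB_def
  set L : ℝ := Real.log (σ₂ ^ 2 / (κ * σ₁ ^ 2)) with hL_def
  have ha : 0 < a := by rw [ha_def]; positivity
  have hb : 0 < b := by rw [hb_def]; positivity
  have hA : 0 < A := by rw [hA_def]; positivity
  have hB : 0 < B := by rw [hB_def]; positivity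
  have hab : b < a := by
    rw [ha_def, hb_def]
    apply inv_strictAnti₀ (by positivity)
    nlinarith
  have hκσ2 : κ * σ₁ ^ 2 < σ₂ ^ 2 := by
    have h1 : (σ₁ * Real.sqrt κ) ^ 2 < σ₂ ^ 2 := by
      apply pow_lt_pow_left₀ hκσ (by positivity) (by norm_num)
    rw [mul_pow, Real.sq_sqrt hκ.le] at h1
    nlinarith
  have h12 : (0:ℝ) < σ₂ ^ 2 - σ₁ ^ 2 := by nlinarith
  have hL : 0 < L := by
    rw [hL_def]
    apply Real.log_pos
    rw [one_lt_div (by positivity)]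
    exact hκσ2
  have hΘsq : Θ ^ 2 = 2 * σ₁ ^ 2 * σ₂ ^ 2 * L / (σ₂ ^ 2 - σ₁ ^ 2) := by
    rw [hΘ, mul_pow, Real.sq_sqrt (by positivity)]
    ring
  have hΘpos : 0 < Θ := by
    rw [hΘ]
    have : 0 < Real.sqrt (2 * L / (σ₂ ^ 2 - σ₁ ^ 2)) := Real.sqrt_pos.mpr (by positivity)
    positivity
  have habΘ : (a - b) * Θ ^ 2 = L := by
    rw [hΘsq, ha_def, hb_def]
    field_simp
  have hlogAB : Real.log A - Real.log B = L := by
    rw [← Real.log_div hA.ne' hB.ne']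
    rw [hL_def]
    congr 1
    rw [hA_def, hB_def]
    field_simp
  -- core sign equivalence
  have key : ∀ y : ℝ, (B * Real.exp (-b * y ^ 2) ≤ A * Real.exp (-a * y ^ 2)
      ↔ (a - b) * y ^ 2 ≤ L) := by
    intro y
    rw [← Real.log_le_log_iff (by positivity) (by positivity),
      Real.log_mul hB.ne' (Real.exp_ne_zero _), Real.log_mul hA.ne' (Real.exp_ne_zero _),
      Real.log_exp, Real.log_exp]
    constructor <;> intro h <;> linarith [hlogAB]
  have sign1 : ∀ y ∈ Ioc (0:ℝ) Θ, B * Real.exp (-b * y ^ 2) ≤ A * Real.exp (-a * y ^ 2) := by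
    intro y hy
    rw [key]
    nlinarith [sq_nonneg y, hy.2, hy.1.le, pow_le_pow_left₀ hy.1.le hy.2 2]
  have key2 : ∀ y : ℝ, (A * Real.exp (-a * y ^ 2) ≤ B * Real.exp (-b * y ^ 2)
      ↔ L ≤ (a - b) * y ^ 2) := by
    intro y
    rw [← Real.log_le_log_iff (by positivity) (by positivity),
      Real.log_mul hB.ne' (Real.exp_ne_zero _), Real.log_mul hA.ne' (Real.exp_ne_zero _),
      Real.log_exp, Real.log_exp]
    constructor <;> intro h <;> linarith [hlogAB]
  have sign2 : ∀ y ∈ Ioi Θ, A * Real.exp (-a * y ^ 2) ≤ B * Real.exp (-b * y ^ 2) := by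
    intro y hy
    rw [key2]
    nlinarith [pow_le_pow_left₀ hΘpos.le (le_of_lt hy.out) 2]
  -- reduce to radial integral
  have h0 : ∀ x : EuclideanSpace ℝ (Fin 2),
      |ω x| = |A * Real.exp (-a * ‖x‖ ^ 2) - B * Real.exp (-b * ‖x‖ ^ 2)| := by
    intro x
    have e1 : -‖x‖ ^ 2 / (2 * σ₁ ^ 2) = -a * ‖x‖ ^ 2 := by rw [ha_def]; ring
    have e2 : -‖x‖ ^ 2 / (2 * σ₂ ^ 2) = -b * ‖x‖ ^ 2 := by rw [hb_def]; ring
    rw [hω x, e1, e2]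
  have hrad : (∫ x, |ω x|)
      = 2 * π * ∫ y in Ioi (0:ℝ), y * |A * Real.exp (-a * y ^ 2) - B * Real.exp (-b * y ^ 2)| := by
    rw [← radial_aux (fun r => |A * Real.exp (-a * r ^ 2) - B * Real.exp (-b * r ^ 2)|)]
    exact integral_congr_ae (Filter.Eventually.of_forall h0)
  have hIoc : IntegrableOn
      (fun y => y * |A * Real.exp (-a * y ^ 2) - B * Real.exp (-b * y ^ 2)|) (Ioc 0 Θ) := by
    apply Continuous.integrableOn_Ioc
    fun_prop
  have hIoi : IntegrableOn
      (fun y => y * |A * Real.exp (-a * y ^ 2) - B * Real.exp (-b * y ^ 2)|) (Ioi Θ) := by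
    apply IntegrableOn.congr_fun
      (((integrableOn_aux b Θ hb hΘpos.le).const_mul B).sub
        ((integrableOn_aux a Θ ha hΘpos.le).const_mul A)) _ measurableSet_Ioi
    intro y hy
    have h := sign2 y hy
    show B * (y * Real.exp (-b * y ^ 2)) - A * (y * Real.exp (-a * y ^ 2))
      = y * |A * Real.exp (-a * y ^ 2) - B * Real.exp (-b * y ^ 2)|
    rw [abs_of_nonpos (by linarith)]
    ring
  have hsplit : (∫ y in Ioi (0:ℝ), y * |A * Real.exp (-a * y ^ 2) - B * Real.exp (-b * y ^ 2)|)
      = (∫ y in Ioc 0 Θ, y * |A * Real.exp (-a * y ^ 2) - B * Real.exp (-b * y ^ 2)|)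
        + ∫ y in Ioi Θ, y * |A * Real.exp (-a * y ^ 2) - B * Real.exp (-b * y ^ 2)| := by
    rw [← setIntegral_union (Ioc_disjoint_Ioi le_rfl) measurableSet_Ioi hIoc hIoi,
      Ioc_union_Ioi_eq_Ioi hΘpos.le]
  have hI1 : (∫ y in Ioc 0 Θ, y * |A * Real.exp (-a * y ^ 2) - B * Real.exp (-b * y ^ 2)|)
      = A * ((1 - Real.exp (-a * Θ ^ 2)) / (2 * a))
        - B * ((1 - Real.exp (-b * Θ ^ 2)) / (2 * b)) := by
    rw [setIntegral_congr_fun measurableSet_Ioc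
      (g := fun y => A * (y * Real.exp (-a * y ^ 2)) - B * (y * Real.exp (-b * y ^ 2))) ?_]
    · rw [integral_sub
        (((integrableOn_aux a 0 ha le_rfl).mono_set Ioc_subset_Ioi_self).const_mul A)
        (((integrableOn_aux b 0 hb le_rfl).mono_set Ioc_subset_Ioi_self).const_mul B),
        integral_const_mul, integral_const_mul,
        integral_Ioc_aux a Θ ha hΘpos.le, integral_Ioc_aux b Θ hb hΘpos.le]
    · intro y hy
      show y * |A * Real.exp (-a * y ^ 2) - B * Real.exp (-b * y ^ 2)|
        = A * (y * Real.exp (-a * y ^ 2)) - B * (y * Real.exp (-b * y ^ 2))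
      rw [abs_of_nonneg (by linarith [sign1 y hy])]
      ring
  have hI2 : (∫ y in Ioi Θ, y * |A * Real.exp (-a * y ^ 2) - B * Real.exp (-b * y ^ 2)|)
      = B * (Real.exp (-b * Θ ^ 2) / (2 * b)) - A * (Real.exp (-a * Θ ^ 2) / (2 * a)) := by
    rw [setIntegral_congr_fun measurableSet_Ioi
      (g := fun y => B * (y * Real.exp (-b * y ^ 2)) - A * (y * Real.exp (-a * y ^ 2))) ?_]
    · rw [integral_sub ((integrableOn_aux b Θ hb hΘpos.le).const_mul B)
        ((integrableOn_aux a Θ ha hΘpos.le).const_mul A),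
        integral_const_mul, integral_const_mul,
        integral_Ioi_aux a Θ ha hΘpos.le, integral_Ioi_aux b Θ hb hΘpos.le]
    · intro y hy
      show y * |A * Real.exp (-a * y ^ 2) - B * Real.exp (-b * y ^ 2)|
        = B * (y * Real.exp (-b * y ^ 2)) - A * (y * Real.exp (-a * y ^ 2))
      rw [abs_of_nonpos (by linarith [sign2 y hy])]
      ring
  have e1 : Real.exp (-Θ ^ 2 / (2 * σ₁ ^ 2)) = Real.exp (-a * Θ ^ 2) := by
    rw [ha_def]; congr 1; ring
  have e2 : Real.exp (-Θ ^ 2 / (2 * σ₂ ^ 2)) = Real.exp (-b * Θ ^ 2) := by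
    rw [hb_def]; congr 1; ring
  rw [hrad, hsplit, hI1, hI2, e1, e2, hA_def, hB_def, ha_def, hb_def]
  have hσ₁' : σ₁ ≠ 0 := hσ₁.ne'
  have hσ₂' : σ₂ ≠ 0 := hσ₂.ne'
  have hπ' : π ≠ 0 := hπ.ne'
  field_simp
  ring
end

section
/- Let f: ℝ → ℝ be α-Lipschitz with f(0) = 0, let ω ∈ L¹(ℝ²), μ > 0 with μα‖ω‖₁ < 1, and I ∈ L^∞(ℝ²). Then there exists a unique a_I ∈ L^∞(ℝ²) satisfying the stationary equation a_I = μ ω ∗ f(a_I) + I, where (ω ∗ v)(x) = ∫_{ℝ²} ω(x−y)v(y) dy. -/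
open MeasureTheory Real Filter

/-- Existence and uniqueness in `L^∞(ℝ²)` of the stationary solution of the
Amari-type neural field equation `a = μ ω ∗ f(a) + I` when `μ α ‖ω‖₁ < 1`. -/
theorem stmt4 (f : ℝ → ℝ) (α : ℝ) (hα : 0 < α)
    (hf : ∀ s t, |f s - f t| ≤ α * |s - t|) (hf0 : f 0 = 0)
    (ω : ℝ × ℝ → ℝ) (hω : Integrable ω)
    (μ : ℝ) (hμ : 0 < μ) (hcontr : μ * α * (∫ x, |ω x|) < 1)
    (I : ℝ × ℝ → ℝ) (hImeas : Measurable I) (hIbd : ∃ C, ∀ x, |I x| ≤ C) :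
    ∃ a : ℝ × ℝ → ℝ, Measurable a ∧ (∃ C, ∀ x, |a x| ≤ C) ∧
      (∀ x, a x = μ * (∫ y, ω (x - y) * f (a y)) + I x) ∧
      ∀ b : ℝ × ℝ → ℝ, Measurable b → (∃ C, ∀ x, |b x| ≤ C) →
        (∀ x, b x = μ * (∫ y, ω (x - y) * f (b y)) + I x) → b = a := by
  classical
  obtain ⟨CI, hCI⟩ := hIbd
  have hCI0 : 0 ≤ CI := (abs_nonneg _).trans (hCI 0)
  -- measurable representative of ω
  set ω' : ℝ × ℝ → ℝ := hω.1.mk ω with hω'def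
  have hω'sm : StronglyMeasurable ω' := hω.1.stronglyMeasurable_mk
  have hωae : ω =ᵐ[volume] ω' := hω.1.ae_eq_mk
  have hω' : Integrable ω' := hω.congr hωae
  set N : ℝ := ∫ x, |ω' x| with hNdef
  have hNω : (∫ x, |ω x|) = N := integral_congr_ae (hωae.mono fun x hx => by simp only [hx])
  have hN0 : 0 ≤ N := integral_nonneg fun x => abs_nonneg _
  set k : ℝ := μ * α * N with hkdef
  have hk1 : k < 1 := by rw [hkdef, ← hNω]; exact hcontr
  have hk0 : 0 ≤ k := by positivity
  have h1k : 0 < 1 - k := by linarith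
  -- properties of f
  have hfb : ∀ s, |f s| ≤ α * |s| := fun s => by simpa [hf0] using hf s 0
  have hfm : Measurable f := by
    have : LipschitzWith (Real.toNNReal α) f :=
      LipschitzWith.of_dist_le_mul fun s t => by
        simpa [Real.dist_eq, Real.coe_toNNReal α hα.le] using hf s t
    exact this.continuous.measurable
  -- replacing ω by ω' in convolutions
  have hcong : ∀ (x : ℝ × ℝ) (h : ℝ × ℝ → ℝ),
      (∫ y, ω (x - y) * h y) = ∫ y, ω' (x - y) * h y := by
    intro x h
    refine integral_congr_ae ?_
    have hqmp : Measure.QuasiMeasurePreserving (fun y : ℝ × ℝ => x - y) volume volume :=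
      (Measure.measurePreserving_sub_left volume x).quasiMeasurePreserving
    filter_upwards [hqmp.ae_eq_comp hωae] with y hy
    simp only [Function.comp_apply] at hy
    rw [hy]
  -- integrability of the integrand
  have hint : ∀ (g : ℝ × ℝ → ℝ), Measurable g → ∀ Cg, (∀ y, |g y| ≤ Cg) →
      ∀ x, Integrable (fun y => ω' (x - y) * f (g y)) := by
    intro g hg Cg hCg x
    have h1 : Integrable (fun y : ℝ × ℝ => ω' (x - y)) := hω'.comp_sub_left x
    have h2 := h1.bdd_mul ((hfm.comp hg).aestronglyMeasurable)
      (c := α * Cg) (Eventually.of_forall fun y => by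
        rw [Real.norm_eq_abs]
        exact (hfb _).trans (mul_le_mul_of_nonneg_left (hCg y) hα.le))
    exact h2.congr (Eventually.of_forall fun y => mul_comm _ _)
  -- the key contraction estimate
  have hTle : ∀ (g h : ℝ × ℝ → ℝ), Measurable g → Measurable h →
      ∀ Cg, (∀ y, |g y| ≤ Cg) → ∀ Ch, (∀ y, |h y| ≤ Ch) →
      ∀ D, 0 ≤ D → (∀ y, |g y - h y| ≤ D) → ∀ x,
      |μ * (∫ y, ω' (x - y) * f (g y)) - μ * (∫ y, ω' (x - y) * f (h y))| ≤ k * D := by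
    intro g h hg hh Cg hCg Ch hCh D hD hgh x
    have hig := hint g hg Cg hCg x
    have hih := hint h hh Ch hCh x
    have hFeq : (fun y : ℝ × ℝ => ω' (x - y) * (f (g y) - f (h y)))
        = fun y => ω' (x - y) * f (g y) - ω' (x - y) * f (h y) := by
      funext y; ring
    have heq : μ * (∫ y, ω' (x - y) * f (g y)) - μ * (∫ y, ω' (x - y) * f (h y))
        = μ * ∫ y, ω' (x - y) * (f (g y) - f (h y)) := by
      rw [hFeq, integral_sub hig hih, mul_sub]
    have hiF : Integrable (fun y : ℝ × ℝ => ω' (x - y) * (f (g y) - f (h y))) := by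
      rw [hFeq]; exact hig.sub hih
    have hibd : Integrable (fun y : ℝ × ℝ => |ω' (x - y)| * (α * D)) :=
      ((hω'.comp_sub_left x).abs).mul_const _
    have h1 : |∫ y, ω' (x - y) * (f (g y) - f (h y))|
        ≤ ∫ y, |ω' (x - y)| * (α * D) := by
      calc |∫ y, ω' (x - y) * (f (g y) - f (h y))|
          ≤ ∫ y, |ω' (x - y) * (f (g y) - f (h y))| := by
            have hni := norm_integral_le_integral_norm (μ := volume)
              (fun y : ℝ × ℝ => ω' (x - y) * (f (g y) - f (h y)))
            simp only [Real.norm_eq_abs] at hni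
            exact hni
        _ ≤ ∫ y, |ω' (x - y)| * (α * D) := by
            refine integral_mono hiF.abs hibd fun y => ?_
            rw [abs_mul]
            refine mul_le_mul_of_nonneg_left ?_ (abs_nonneg _)
            exact (hf _ _).trans (mul_le_mul_of_nonneg_left (hgh y) hα.le)
    have h2 : (∫ y, |ω' (x - y)| * (α * D)) = N * (α * D) := by
      rw [integral_mul_const]
      congr 1
      exact integral_sub_left_eq_self (fun y => |ω' y|) volume x
    rw [heq, abs_mul, abs_of_pos hμ]
    calc μ * |∫ y, ω' (x - y) * (f (g y) - f (h y))|
        ≤ μ * (N * (α * D)) := mul_le_mul_of_nonneg_left (h1.trans_eq h2) hμ.le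
      _ = k * D := by rw [hkdef]; ring
  -- boundedness of the map
  have hTbd : ∀ (g : ℝ × ℝ → ℝ), Measurable g → ∀ Cg, 0 ≤ Cg → (∀ y, |g y| ≤ Cg) →
      ∀ x, |μ * (∫ y, ω' (x - y) * f (g y))| ≤ k * Cg := by
    intro g hg Cg hCg0 hCg x
    have h0 := hTle g (fun _ => 0) hg measurable_const Cg hCg 0
      (fun y => by simp) Cg hCg0 (fun y => by simpa using hCg y) x
    simpa [hf0] using h0
  -- the invariant bound
  set C : ℝ := CI / (1 - k) with hCdef
  have hC0 : 0 ≤ C := div_nonneg hCI0 h1k.le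
  have hCfix : k * C + CI = C := by
    rw [hCdef]; field_simp; ring
  have hCI_le_C : CI ≤ C := by
    rw [hCdef, le_div_iff₀ h1k]; nlinarith
  -- the iteration map and sequence
  set T : (ℝ × ℝ → ℝ) → ℝ × ℝ → ℝ :=
    fun g x => μ * (∫ y, ω' (x - y) * f (g y)) + I x with hTdef
  have hTmeas : ∀ g, Measurable g → Measurable (T g) := by
    intro g hg
    have hF : StronglyMeasurable (fun p : (ℝ × ℝ) × ℝ × ℝ => ω' (p.1 - p.2) * f (g p.2)) :=
      ((hω'sm.measurable.comp (measurable_fst.sub measurable_snd)).mul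
        ((hfm.comp hg).comp measurable_snd)).stronglyMeasurable
    exact ((hF.integral_prod_right'.measurable.const_mul μ).add hImeas)
  set A : ℕ → ℝ × ℝ → ℝ := fun n => T^[n] I with hAdef
  have hA0 : A 0 = I := rfl
  have hAsucc : ∀ n, A (n + 1) = T (A n) := by
    intro n; rw [hAdef]; exact Function.iterate_succ_apply' T n I
  have hA : ∀ n, Measurable (A n) ∧ ∀ x, |A n x| ≤ C := by
    intro n
    induction n with
    | zero => exact ⟨hImeas, fun x => (hCI x).trans hCI_le_C⟩
    | succ n ih =>
      rw [hAsucc n]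
      refine ⟨hTmeas _ ih.1, fun x => ?_⟩
      calc |T (A n) x| ≤ |μ * (∫ y, ω' (x - y) * f (A n y))| + |I x| := abs_add_le _ _
        _ ≤ k * C + CI :=
          add_le_add (hTbd (A n) ih.1 C hC0 ih.2 x) (hCI x)
        _ = C := hCfix
  have hdiff : ∀ n x, |A (n + 1) x - A n x| ≤ (2 * C) * k ^ n := by
    intro n
    induction n with
    | zero =>
      intro x
      simp only [pow_zero, mul_one]
      calc |A 1 x - A 0 x| ≤ |A 1 x| + |A 0 x| := abs_sub _ _
        _ ≤ 2 * C := by have := (hA 1).2 x; have := (hA 0).2 x; linarith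
    | succ n ih =>
      intro x
      have h1 : A (n + 2) x - A (n + 1) x
          = μ * (∫ y, ω' (x - y) * f (A (n + 1) y)) - μ * (∫ y, ω' (x - y) * f (A n y)) := by
        rw [hAsucc (n + 1), hAsucc n]; simp only [hTdef]; ring
      have h2 := hTle (A (n + 1)) (A n) (hA (n + 1)).1 (hA n).1 C (hA (n + 1)).2 C (hA n).2
        ((2 * C) * k ^ n) (by positivity) ih x
      rw [h1]
      calc |_| ≤ k * ((2 * C) * k ^ n) := h2
        _ = (2 * C) * k ^ (n + 1) := by ring
  -- convergence of the sequence
  have hdist : ∀ x n, dist (A n x) (A (n + 1) x) ≤ (2 * C) * k ^ n := by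
    intro x n
    rw [Real.dist_eq, abs_sub_comm]
    exact hdiff n x
  have hconv : ∀ x, ∃ L, Tendsto (fun n => A n x) atTop (nhds L) := by
    intro x
    exact cauchySeq_tendsto_of_complete (cauchySeq_of_le_geometric k (2 * C) hk1 (hdist x))
  choose a ha using hconv
  have hameas : Measurable a :=
    measurable_of_tendsto_metrizable' atTop (fun n => (hA n).1)
      (tendsto_pi_nhds.2 ha)
  have habd : ∀ x, |a x| ≤ C := by
    intro x
    exact le_of_tendsto ((ha x).abs) (Eventually.of_forall fun n => (hA n).2 x)
  have htail : ∀ n x, |a x - A n x| ≤ (2 * C) * k ^ n / (1 - k) := by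
    intro n x
    have := dist_le_of_le_geometric_of_tendsto k (2 * C) hk1 (hdist x) (ha x) n
    rwa [Real.dist_eq, abs_sub_comm] at this
  -- the limit is a fixed point
  have hfix : ∀ x, a x = T a x := by
    intro x
    set B : ℝ := (2 * C) * k / (1 - k) + k * ((2 * C) / (1 - k)) with hBdef
    have key : ∀ n : ℕ, |a x - T a x| ≤ B * k ^ n := by
      intro n
      have h1 : |a x - A (n + 1) x| ≤ (2 * C) * k ^ (n + 1) / (1 - k) := htail (n + 1) x
      have h2 : |A (n + 1) x - T a x| ≤ k * ((2 * C) * k ^ n / (1 - k)) := by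
        have h3 := hTle (A n) a (hA n).1 hameas C (hA n).2 C habd
          ((2 * C) * k ^ n / (1 - k)) (by positivity) (fun y => by rw [abs_sub_comm]; exact htail n y) x
        have h4 : A (n + 1) x - T a x
            = μ * (∫ y, ω' (x - y) * f (A n y)) - μ * (∫ y, ω' (x - y) * f (a y)) := by
          rw [hAsucc n]; simp only [hTdef]; ring
        rw [h4]; exact h3
      calc |a x - T a x| ≤ |a x - A (n + 1) x| + |A (n + 1) x - T a x| := abs_sub_le _ _ _
        _ ≤ (2 * C) * k ^ (n + 1) / (1 - k) + k * ((2 * C) * k ^ n / (1 - k)) :=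
          add_le_add h1 h2
        _ = B * k ^ n := by rw [hBdef]; ring
    have htend : Tendsto (fun n : ℕ => B * k ^ n) atTop (nhds 0) := by
      simpa using (tendsto_pow_atTop_nhds_zero_of_lt_one hk0 hk1).const_mul B
    have hle0 : |a x - T a x| ≤ 0 := ge_of_tendsto' htend key
    have : a x - T a x = 0 := abs_eq_zero.mp (le_antisymm hle0 (abs_nonneg _))
    linarith
  refine ⟨a, hameas, ⟨C, habd⟩, ?_, ?_⟩
  · intro x
    rw [hcong x (fun y => f (a y))]
    exact hfix x
  · intro b hbm hbbd hbfix
    obtain ⟨Cb, hCb⟩ := hbbd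
    have hCb0 : 0 ≤ Cb := (abs_nonneg _).trans (hCb 0)
    have hbfix' : ∀ x, b x = μ * (∫ y, ω' (x - y) * f (b y)) + I x := by
      intro x; rw [hbfix x, hcong x (fun y => f (b y))]
    set D : ℝ := Cb + C with hDdef
    have hD0 : 0 ≤ D := by positivity
    have hiter : ∀ n x, |b x - a x| ≤ D * k ^ n := by
      intro n
      induction n with
      | zero =>
        intro x
        simp only [pow_zero, mul_one]
        calc |b x - a x| ≤ |b x| + |a x| := abs_sub _ _
          _ ≤ D := by have := hCb x; have := habd x; rw [hDdef]; linarith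
      | succ n ih =>
        intro x
        have h1 : b x - a x
            = μ * (∫ y, ω' (x - y) * f (b y)) - μ * (∫ y, ω' (x - y) * f (a y)) := by
          rw [hbfix' x, hfix x]; simp only [hTdef]; ring
        have h2 := hTle b a hbm hameas Cb hCb C habd (D * k ^ n) (by positivity) ih x
        rw [h1]
        calc |_| ≤ k * (D * k ^ n) := h2
          _ = D * k ^ (n + 1) := by ring
    funext x
    have htend : Tendsto (fun n : ℕ => D * k ^ n) atTop (nhds 0) := by
      simpa using (tendsto_pow_atTop_nhds_zero_of_lt_one hk0 hk1).const_mul D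
    have hle0 : |b x - a x| ≤ 0 := ge_of_tendsto' htend (fun n => hiter n x)
    have : b x - a x = 0 := abs_eq_zero.mp (le_antisymm hle0 (abs_nonneg _))
    linarith
end

section
/- Assume 0 < μ < μ₀ := 1/(α‖ω‖₁), I ∈ L^∞(ℝ²), and set m_α := α‖I‖_∞(1 − μ/μ₀)^{−1}. For m ≥ m_α, let a_{m,α} be the unique stationary solution of a = I + μω∗f_{m,α}(a), where f_{m,α}(s) = max(−m, min(1, αs)). Then a_{m,α} coincides with the unique stationary solution of the equation with response function f_{m_α,α}, i.e., the stationary solution is independent of m for m ≥ m_α. -/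
open MeasureTheory Real

lemma lipMax (a u v : ℝ) : |max a u - max a v| ≤ |u - v| := by
  simp only [max_def]
  split_ifs <;> rw [abs_sub_le_iff] <;> constructor <;>
    linarith [le_abs_self (u - v), neg_abs_le (u - v), abs_nonneg (u - v)]

lemma lipMin (u v : ℝ) : |min 1 u - min 1 v| ≤ |u - v| := by
  simp only [min_def]
  split_ifs <;> rw [abs_sub_le_iff] <;> constructor <;>
    linarith [le_abs_self (u - v), neg_abs_le (u - v), abs_nonneg (u - v)]

lemma Fabs (m u : ℝ) (hm : 0 ≤ m) : |max (-m) (min 1 u)| ≤ |u| := by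
  simp only [max_def, min_def]
  split_ifs <;> rw [abs_le] <;> constructor <;>
    linarith [le_abs_self u, neg_abs_le u, abs_nonneg u]

lemma intOK (ω : ℝ × ℝ → ℝ) (hω : Integrable ω) (h : ℝ × ℝ → ℝ)
    (hh : Measurable h) (D : ℝ) (hD : ∀ y, |h y| ≤ D) (x : ℝ × ℝ) :
    Integrable (fun y => ω (x - y) * h y) := by
  have h1 : Integrable (fun y => ω (x - y)) := hω.comp_sub_left x
  have := h1.bdd_mul hh.aestronglyMeasurable (c := D) (Filter.Eventually.of_forall fun y => hD y)
  exact this.congr (Filter.Eventually.of_forall fun y => mul_comm _ _)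

lemma intBound (ω : ℝ × ℝ → ℝ) (hω : Integrable ω) (h : ℝ × ℝ → ℝ)
    (hh : Measurable h) (D : ℝ) (hD : ∀ y, |h y| ≤ D) (x : ℝ × ℝ) :
    |∫ y, ω (x - y) * h y| ≤ (∫ y, |ω y|) * D := by
  have h1 : Integrable (fun y => ω (x - y)) := hω.comp_sub_left x
  have h2 := intOK ω hω h hh D hD x
  calc |∫ y, ω (x - y) * h y| ≤ ∫ y, |ω (x - y) * h y| := by
        simpa only [Real.norm_eq_abs] using
          norm_integral_le_integral_norm (μ := volume) (fun y => ω (x - y) * h y)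
    _ ≤ ∫ y, |ω (x - y)| * D := by
        apply integral_mono h2.abs (h1.abs.mul_const D)
        intro y
        simp only [abs_mul]
        exact mul_le_mul_of_nonneg_left (hD y) (abs_nonneg _)
    _ = (∫ y, |ω (x - y)|) * D := integral_mul_const D _
    _ = (∫ y, |ω y|) * D := by rw [integral_sub_left_eq_self (fun y => |ω y|) _ x]

/-- For `m ≥ m_α := α‖I‖_∞(1−μ/μ₀)⁻¹` the stationary solution of the Amari-type
equation with response function `f_{m,α}` is independent of `m`: it coincides with
the stationary solution for the response function `f_{m_α,α}`. -/
theorem stmt10 (α μ CI : ℝ) (hα : 0 < α) (hμ : 0 < μ)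
    (ω : ℝ × ℝ → ℝ) (hω : Integrable ω)
    (hcontr : μ * α * (∫ x, |ω x|) < 1)
    (I : ℝ × ℝ → ℝ) (hImeas : Measurable I) (hICI : ∀ x, |I x| ≤ CI)
    (F : ℝ → ℝ → ℝ) (hF : ∀ m s, F m s = max (-m) (min 1 (α * s)))
    (m mα : ℝ) (hmα : mα = α * CI * (1 - μ * α * (∫ x, |ω x|))⁻¹) (hm : mα ≤ m)
    (a b : ℝ × ℝ → ℝ)
    (hameas : Measurable a) (habd : ∃ C, ∀ x, |a x| ≤ C)
    (hbmeas : Measurable b) (hbbd : ∃ C, ∀ x, |b x| ≤ C)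
    (ha : ∀ x, a x = I x + μ * ∫ y, ω (x - y) * F m (a y))
    (hb : ∀ x, b x = I x + μ * ∫ y, ω (x - y) * F mα (b y)) :
    a = b := by
  set K : ℝ := ∫ y, |ω y| with hKdef
  have hK : 0 ≤ K := integral_nonneg fun y => abs_nonneg _
  set q : ℝ := μ * α * K with hqdef
  have hq0 : 0 ≤ q := by positivity
  have hq1 : q < 1 := hcontr
  have hCI : 0 ≤ CI := (abs_nonneg (I 0)).trans (hICI 0)
  have hinv : 0 ≤ (1 - q)⁻¹ := by
    apply inv_nonneg.mpr; linarith
  have hmα0 : 0 ≤ mα := by rw [hmα]; positivity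
  have hm0 : 0 ≤ m := le_trans hmα0 hm
  -- Lipschitz property of the response function
  have hlip : ∀ m' s t : ℝ, |max (-m') (min 1 (α * s)) - max (-m') (min 1 (α * t))| ≤
      α * |s - t| := by
    intro m' s t
    calc |max (-m') (min 1 (α * s)) - max (-m') (min 1 (α * t))|
        ≤ |min 1 (α * s) - min 1 (α * t)| := lipMax _ _ _
      _ ≤ |α * s - α * t| := lipMin _ _
      _ = α * |s - t| := by rw [← mul_sub, abs_mul, abs_of_pos hα]
  -- a priori bound for any bounded solution
  have key : ∀ m' : ℝ, 0 ≤ m' → ∀ g : ℝ × ℝ → ℝ, Measurable g →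
      (∃ C, ∀ x, |g x| ≤ C) →
      (∀ x, g x = I x + μ * ∫ y, ω (x - y) * F m' (g y)) →
      ∀ x, |g x| ≤ CI * (1 - q)⁻¹ := by
    intro m' hm' g hgmeas ⟨C, hC⟩ hgeq x
    have hC0 : 0 ≤ C := (abs_nonneg (g 0)).trans (hC 0)
    have hFmeas : Measurable (fun y => F m' (g y)) := by
      simp only [hF]
      exact measurable_const.max (measurable_const.min (hgmeas.const_mul α))
    have step : ∀ C', 0 ≤ C' → (∀ z, |g z| ≤ C') → ∀ z, |g z| ≤ CI + q * C' := by
      intro C' hC'0 hC' z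
      have hFb : ∀ y, |F m' (g y)| ≤ α * C' := by
        intro y
        rw [hF]
        calc |max (-m') (min 1 (α * g y))| ≤ |α * g y| := Fabs _ _ hm'
          _ = α * |g y| := by rw [abs_mul, abs_of_pos hα]
          _ ≤ α * C' := by nlinarith [hC' y]
      have hi := intBound ω hω (fun y => F m' (g y)) hFmeas (α * C') hFb z
      calc |g z| = |I z + μ * ∫ y, ω (z - y) * F m' (g y)| := by rw [hgeq z]
        _ ≤ |I z| + |μ * ∫ y, ω (z - y) * F m' (g y)| := abs_add_le _ _
        _ ≤ CI + μ * (K * (α * C')) := by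
            refine add_le_add (hICI z) ?_
            rw [abs_mul, abs_of_pos hμ]
            exact mul_le_mul_of_nonneg_left hi hμ.le
        _ = CI + q * C' := by rw [hqdef]; ring
    have iter : ∀ n : ℕ, ∀ z, |g z| ≤ CI * (∑ i ∈ Finset.range n, q ^ i) + q ^ n * C := by
      intro n
      induction n with
      | zero => intro z; simpa using hC z
      | succ n ih =>
        intro z
        have hb0 : 0 ≤ CI * (∑ i ∈ Finset.range n, q ^ i) + q ^ n * C := by
          have : 0 ≤ ∑ i ∈ Finset.range n, q ^ i :=
            Finset.sum_nonneg fun i _ => pow_nonneg hq0 i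
          positivity
        calc |g z| ≤ CI + q * (CI * (∑ i ∈ Finset.range n, q ^ i) + q ^ n * C) :=
              step _ hb0 ih z
          _ = CI * (∑ i ∈ Finset.range (n + 1), q ^ i) + q ^ (n + 1) * C := by
              rw [geom_sum_succ]; ring
    have hts : Filter.Tendsto
        (fun n : ℕ => CI * (∑ i ∈ Finset.range n, q ^ i) + q ^ n * C)
        Filter.atTop (nhds (CI * (1 - q)⁻¹ + 0 * C)) := by
      exact (((hasSum_geometric_of_lt_one hq0 hq1).tendsto_sum_nat).const_mul CI).add
        ((tendsto_pow_atTop_nhds_zero_of_lt_one hq0 hq1).mul_const C)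
    have := ge_of_tendsto' hts (fun n => iter n x)
    simpa using this
  have haL : ∀ y, |a y| ≤ CI * (1 - q)⁻¹ := key m hm0 a hameas habd ha
  -- F m and F mα agree on the range of a
  have hFeq : ∀ y, F m (a y) = F mα (a y) := by
    intro y
    have h1 : -(CI * (1 - q)⁻¹) ≤ a y := neg_le_of_abs_le (haL y)
    have h2 : -mα ≤ α * a y := by
      rw [hmα, hqdef] at *
      nlinarith
    have h3 : -mα ≤ min 1 (α * a y) := le_min (by linarith) h2
    have h4 : -m ≤ min 1 (α * a y) := le_trans (by linarith) h3
    rw [hF, hF, max_eq_right h3, max_eq_right h4]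
  have ha' : ∀ x, a x = I x + μ * ∫ y, ω (x - y) * F mα (a y) := by
    intro x
    rw [ha x]
    congr 2
    exact integral_congr_ae (Filter.Eventually.of_forall fun y => by simp only [hFeq])
  -- contraction: a = b
  obtain ⟨Ca, hCa⟩ := habd
  obtain ⟨Cb, hCb⟩ := hbbd
  have hCa0 : 0 ≤ Ca := (abs_nonneg (a 0)).trans (hCa 0)
  have hCb0 : 0 ≤ Cb := (abs_nonneg (b 0)).trans (hCb 0)
  have hgmeas : Measurable (fun y => F mα (a y) - F mα (b y)) := by
    simp only [hF]
    exact (measurable_const.max (measurable_const.min (hameas.const_mul α))).sub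
      (measurable_const.max (measurable_const.min (hbmeas.const_mul α)))
  have hFameas : Measurable (fun y => F mα (a y)) := by
    simp only [hF]
    exact measurable_const.max (measurable_const.min (hameas.const_mul α))
  have hFbmeas : Measurable (fun y => F mα (b y)) := by
    simp only [hF]
    exact measurable_const.max (measurable_const.min (hbmeas.const_mul α))
  have hFab : ∀ y, |F mα (a y)| ≤ α * Ca := by
    intro y
    rw [hF]
    calc |max (-mα) (min 1 (α * a y))| ≤ |α * a y| := Fabs _ _ hmα0
      _ = α * |a y| := by rw [abs_mul, abs_of_pos hα]
      _ ≤ α * Ca := by nlinarith [hCa y]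
  have hFbb : ∀ y, |F mα (b y)| ≤ α * Cb := by
    intro y
    rw [hF]
    calc |max (-mα) (min 1 (α * b y))| ≤ |α * b y| := Fabs _ _ hmα0
      _ = α * |b y| := by rw [abs_mul, abs_of_pos hα]
      _ ≤ α * Cb := by nlinarith [hCb y]
  have step2 : ∀ D, 0 ≤ D → (∀ z, |a z - b z| ≤ D) → ∀ z, |a z - b z| ≤ q * D := by
    intro D hD0 hD z
    have h1 := intOK ω hω _ hFameas (α * Ca) hFab z
    have h2 := intOK ω hω _ hFbmeas (α * Cb) hFbb z
    have hgb : ∀ y, |F mα (a y) - F mα (b y)| ≤ α * D := by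
      intro y
      rw [hF, hF]
      calc |max (-mα) (min 1 (α * a y)) - max (-mα) (min 1 (α * b y))|
          ≤ α * |a y - b y| := hlip mα _ _
        _ ≤ α * D := by nlinarith [hD y]
    have hi := intBound ω hω (fun y => F mα (a y) - F mα (b y)) hgmeas (α * D) hgb z
    have hsub : (∫ y, ω (z - y) * F mα (a y)) - (∫ y, ω (z - y) * F mα (b y))
        = ∫ y, ω (z - y) * (F mα (a y) - F mα (b y)) := by
      rw [← integral_sub h1 h2]
      congr 1
      funext y
      ring
    calc |a z - b z| = |μ * ((∫ y, ω (z - y) * F mα (a y)) -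
          (∫ y, ω (z - y) * F mα (b y)))| := by
          rw [ha' z, hb z]; congr 1; ring
      _ = μ * |∫ y, ω (z - y) * (F mα (a y) - F mα (b y))| := by
          rw [hsub, abs_mul, abs_of_pos hμ]
      _ ≤ μ * (K * (α * D)) := mul_le_mul_of_nonneg_left hi hμ.le
      _ = q * D := by rw [hqdef]; ring
  have iter2 : ∀ n : ℕ, ∀ z, |a z - b z| ≤ q ^ n * (Ca + Cb) := by
    intro n
    induction n with
    | zero =>
      intro z
      simpa using (abs_sub (a z) (b z)).trans (add_le_add (hCa z) (hCb z))
    | succ n ih =>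
      intro z
      have h0 : 0 ≤ q ^ n * (Ca + Cb) := by positivity
      calc |a z - b z| ≤ q * (q ^ n * (Ca + Cb)) := step2 _ h0 ih z
        _ = q ^ (n + 1) * (Ca + Cb) := by ring
  funext x
  have hts : Filter.Tendsto (fun n : ℕ => q ^ n * (Ca + Cb)) Filter.atTop (nhds 0) := by
    simpa using (tendsto_pow_atTop_nhds_zero_of_lt_one hq0 hq1).mul_const (Ca + Cb)
  have := ge_of_tendsto' hts (fun n => iter2 n x)
  have habs : |a x - b x| ≤ 0 := this
  have := abs_nonpos_iff.mp habs
  linarith [sub_eq_zero.mp this]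
end

section
/- Assume 0 < μ < μ₀ := 1/(α‖ω‖₁) and min(1,m)/α ≥ ‖I‖_∞(1 − μ/μ₀)^{−1}. Then the unique stationary solution of a = I + μω∗f_{m,α}(a), with f_{m,α}(s) = max(−m, min(1, αs)), coincides with the unique stationary solution of the linear equation a = I + μα ω∗a. -/
open MeasureTheory Real

/-- Convolution integrability and bound helper. -/
lemma conv_aux (ω : ℝ × ℝ → ℝ) (hω : Integrable ω) (g : ℝ × ℝ → ℝ)
    (hg : AEStronglyMeasurable g volume) (D : ℝ) (hgD : ∀ y, |g y| ≤ D) (x : ℝ × ℝ) :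
    Integrable (fun y => ω (x - y) * g y) ∧
      |∫ y, ω (x - y) * g y| ≤ (∫ z, |ω z|) * D := by
  have hωx : Integrable (fun y => ω (x - y)) := hω.comp_sub_left x
  have hint : Integrable (fun y => g y * ω (x - y)) :=
    hωx.bdd_mul (c := D) hg (Filter.Eventually.of_forall fun y => by simpa [Real.norm_eq_abs] using hgD y)
  have hint' : Integrable (fun y => ω (x - y) * g y) := by
    simpa [mul_comm] using hint
  refine ⟨hint', ?_⟩
  have h0 := norm_integral_le_integral_norm (μ := volume) (fun y => ω (x - y) * g y)
  simp only [Real.norm_eq_abs] at h0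
  calc |∫ y, ω (x - y) * g y| ≤ ∫ y, |ω (x - y) * g y| := h0
    _ ≤ ∫ y, |ω (x - y)| * D := by
        refine integral_mono hint'.abs (hωx.abs.mul_const D) (fun y => ?_)
        rw [abs_mul]
        exact mul_le_mul_of_nonneg_left (hgD y) (abs_nonneg _)
    _ = (∫ y, |ω (x - y)|) * D := integral_mul_const D _
    _ = (∫ z, |ω z|) * D := by
        rw [integral_sub_left_eq_self (fun z => |ω z|) volume x]

/-- When the saturation thresholds of `f_{m,α}` exceed the a priori `L^∞` bound of
the solution, the stationary solution of the Amari-type equation with nonlinearity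
`f_{m,α}` coincides with that of the linear equation with slope `α`. -/
theorem stmt11 (α μ CI m : ℝ) (hα : 0 < α) (hμ : 0 < μ) (hm : 0 ≤ m)
    (ω : ℝ × ℝ → ℝ) (hω : Integrable ω)
    (hcontr : μ * α * (∫ x, |ω x|) < 1)
    (hthresh : CI * (1 - μ * α * (∫ x, |ω x|))⁻¹ ≤ min 1 m / α)
    (I : ℝ × ℝ → ℝ) (hImeas : Measurable I) (hICI : ∀ x, |I x| ≤ CI)
    (F : ℝ → ℝ → ℝ) (hF : ∀ m' s, F m' s = max (-m') (min 1 (α * s)))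
    (a b : ℝ × ℝ → ℝ)
    (hameas : Measurable a) (habd : ∃ C, ∀ x, |a x| ≤ C)
    (hbmeas : Measurable b) (hbbd : ∃ C, ∀ x, |b x| ≤ C)
    (ha : ∀ x, a x = I x + μ * ∫ y, ω (x - y) * F m (a y))
    (hb : ∀ x, b x = I x + μ * α * ∫ y, ω (x - y) * b y) :
    a = b := by
  set K := ∫ z, |ω z| with hK
  have hK0 : 0 ≤ K := integral_nonneg fun z => abs_nonneg _
  set κ := μ * α * K with hκdef
  have hκ0 : 0 ≤ κ := by positivity
  have hκ1 : κ < 1 := hcontr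
  have hCI0 : 0 ≤ CI := le_trans (abs_nonneg _) (hICI 0)
  obtain ⟨C, hC⟩ := habd
  have hC0 : 0 ≤ C := le_trans (abs_nonneg _) (hC 0)
  -- |F m s| ≤ α |s|
  have hFle : ∀ s : ℝ, |F m s| ≤ α * |s| := by
    intro s
    rw [hF, abs_le]
    have habs : α * |s| = |α * s| := by rw [abs_mul, abs_of_pos hα]
    constructor
    · refine le_max_of_le_right (le_min ?_ ?_)
      · rw [habs]; linarith [abs_nonneg (α * s)]
      · rw [habs]; exact neg_abs_le _
    · refine max_le ?_ (le_trans (min_le_right _ _) ?_)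
      · rw [habs]; linarith [abs_nonneg (α * s), hm]
      · rw [habs]; exact le_abs_self _
  -- measurability of F m ∘ a
  have hFa_meas : AEStronglyMeasurable (fun y => F m (a y)) volume := by
    have : Measurable fun y => max (-m) (min 1 (α * a y)) :=
      measurable_const.max (measurable_const.min (hameas.const_mul α))
    exact (by simpa [hF] using this : Measurable fun y => F m (a y)).aestronglyMeasurable
  -- iteration bound for a
  set L := CI * (1 - κ)⁻¹ with hL
  have h1κ : 0 < 1 - κ := by linarith
  have hLκ : CI + κ * L = L := by
    rw [hL]
    field_simp [h1κ.ne']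
    ring
  have hL0 : 0 ≤ L := by positivity
  have hstep : ∀ D : ℝ, (∀ y, |a y| ≤ D) → ∀ x, |a x| ≤ CI + κ * D := by
    intro D hD x
    have hFaD : ∀ y, |F m (a y)| ≤ α * D := fun y =>
      le_trans (hFle _) (mul_le_mul_of_nonneg_left (hD y) hα.le)
    have := (conv_aux ω hω (fun y => F m (a y)) hFa_meas (α * D) hFaD x).2
    rw [ha x]
    calc |I x + μ * ∫ y, ω (x - y) * F m (a y)|
        ≤ |I x| + |μ * ∫ y, ω (x - y) * F m (a y)| := abs_add_le _ _
      _ ≤ CI + μ * (K * (α * D)) := by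
          refine add_le_add (hICI x) ?_
          rw [abs_mul, abs_of_pos hμ]
          exact mul_le_mul_of_nonneg_left this hμ.le
      _ = CI + κ * D := by ring
  have hiter : ∀ n : ℕ, ∀ x, |a x| ≤ L + κ ^ n * C := by
    intro n
    induction n with
    | zero => intro x; simpa using le_trans (hC x) (by linarith)
    | succ n ih =>
        intro x
        calc |a x| ≤ CI + κ * (L + κ ^ n * C) := hstep _ ih x
          _ = (CI + κ * L) + κ ^ (n + 1) * C := by ring
          _ = L + κ ^ (n + 1) * C := by rw [hLκ]
  have haL : ∀ x, |a x| ≤ L := by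
    intro x
    have htend : Filter.Tendsto (fun n : ℕ => L + κ ^ n * C) Filter.atTop (nhds L) := by
      have := (tendsto_pow_atTop_nhds_zero_of_lt_one hκ0 hκ1).mul_const C
      simpa using Filter.Tendsto.const_add L this
    exact ge_of_tendsto' htend fun n => hiter n x
  -- F acts linearly on a
  have hFa : ∀ y, F m (a y) = α * a y := by
    intro y
    have hbound : α * |a y| ≤ min 1 m := by
      have h1 : α * L ≤ min 1 m := by
        rw [mul_comm]; exact (le_div_iff₀ hα).mp hthresh
      exact le_trans (mul_le_mul_of_nonneg_left (haL y) hα.le) h1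
    have hconv : |α * a y| ≤ min 1 m := by
      rw [abs_mul, abs_of_pos hα]; exact hbound
    have hub : α * a y ≤ 1 :=
      le_trans (le_trans (le_abs_self _) hconv) (min_le_left 1 m)
    have hlb : -m ≤ α * a y := by
      have := le_trans hconv (min_le_right 1 m)
      linarith [neg_abs_le (α * a y)]
    rw [hF, min_eq_right hub, max_eq_right hlb]
  -- a satisfies the linear equation
  have ha' : ∀ x, a x = I x + μ * α * ∫ y, ω (x - y) * a y := by
    intro x
    rw [ha x]
    congr 1
    have : ∀ y, ω (x - y) * F m (a y) = α * (ω (x - y) * a y) := by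
      intro y; rw [hFa y]; ring
    rw [show (fun y => ω (x - y) * F m (a y)) = fun y => α * (ω (x - y) * a y) from funext this]
    rw [integral_const_mul]
    ring
  -- difference d = a - b satisfies contraction
  obtain ⟨Cb, hCb⟩ := hbbd
  set d := fun x => a x - b x with hd
  have hdmeas : AEStronglyMeasurable d volume := (hameas.sub hbmeas).aestronglyMeasurable
  have hdbd : ∀ x, |d x| ≤ L + Cb := fun x =>
    le_trans (abs_sub _ _) (add_le_add (haL x) (hCb x))
  have hdeq : ∀ x, d x = μ * α * ∫ y, ω (x - y) * d y := by
    intro x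
    have hia := (conv_aux ω hω a hameas.aestronglyMeasurable L haL x).1
    have hib := (conv_aux ω hω b hbmeas.aestronglyMeasurable Cb hCb x).1
    have hsplit : (∫ y, ω (x - y) * d y) =
        (∫ y, ω (x - y) * a y) - ∫ y, ω (x - y) * b y := by
      rw [← integral_sub hia hib]
      congr 1; funext y; simp [hd]; ring
    rw [hsplit, hd]
    simp only
    rw [ha' x, hb x]
    ring
  have hdstep : ∀ D : ℝ, (∀ y, |d y| ≤ D) → ∀ x, |d x| ≤ κ * D := by
    intro D hD x
    have := (conv_aux ω hω d hdmeas D hD x).2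
    rw [hdeq x, abs_mul, abs_of_pos (by positivity : (0:ℝ) < μ * α)]
    calc μ * α * |∫ y, ω (x - y) * d y| ≤ μ * α * (K * D) :=
          mul_le_mul_of_nonneg_left this (by positivity)
      _ = κ * D := by ring
  have hditer : ∀ n : ℕ, ∀ x, |d x| ≤ κ ^ n * (L + Cb) := by
    intro n
    induction n with
    | zero => intro x; simpa using hdbd x
    | succ n ih =>
        intro x
        calc |d x| ≤ κ * (κ ^ n * (L + Cb)) := hdstep _ ih x
          _ = κ ^ (n + 1) * (L + Cb) := by ring
  have hd0 : ∀ x, d x = 0 := by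
    intro x
    have htend : Filter.Tendsto (fun n : ℕ => κ ^ n * (L + Cb)) Filter.atTop (nhds 0) := by
      simpa using (tendsto_pow_atTop_nhds_zero_of_lt_one hκ0 hκ1).mul_const (L + Cb)
    have : |d x| ≤ 0 := ge_of_tendsto' htend fun n => hditer n x
    exact abs_eq_zero.mp (le_antisymm this (abs_nonneg _))
  funext x
  have := hd0 x
  simp [hd] at this
  linarith
end

section
/- Let λ > 0, I(x₁,x₂) = cos(2πλx₂)I₁(x₁) with I₁ ∈ L^∞(ℝ), ω ∈ L¹(ℝ²) radial (hence even in x₂), f α-Lipschitz with f(0)=0, and 0 < μ < μ₀ := 1/(α‖ω‖₁). Then the unique stationary solution a_I of a = I + μω∗f(a) satisfies a_I(x₁, x₂ + 1/λ) = a_I(x₁,x₂) and a_I(x₁,−x₂) = a_I(x₁,x₂) for a.e. (x₁,x₂) ∈ ℝ². -/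
open MeasureTheory Real

/-- Uniqueness of bounded measurable solutions of the fixed point equation. -/
lemma stmt13_unique (α μ : ℝ) (hα : 0 < α) (hμ : 0 < μ)
    (f : ℝ → ℝ) (hf : ∀ s t, |f s - f t| ≤ α * |s - t|) (hf0 : f 0 = 0)
    (ω : ℝ × ℝ → ℝ) (hω : Integrable ω)
    (hcontr : μ * α * (∫ x, |ω x|) < 1)
    (g a b : ℝ × ℝ → ℝ) (hma : Measurable a) (hmb : Measurable b)
    (Ca : ℝ) (hCa : ∀ x, |a x| ≤ Ca) (Cb : ℝ) (hCb : ∀ x, |b x| ≤ Cb)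
    (ha : ∀ x : ℝ × ℝ, a x = g x + μ * ∫ y, ω (x - y) * f (a y))
    (hb : ∀ x : ℝ × ℝ, b x = g x + μ * ∫ y, ω (x - y) * f (b y)) :
    ∀ x, a x = b x := by
  have hfl : LipschitzWith (Real.toNNReal α) f := by
    apply LipschitzWith.of_dist_le_mul
    intro s t
    rw [Real.dist_eq, Real.dist_eq, Real.coe_toNNReal α hα.le]
    exact hf s t
  have hfabs : ∀ (C : ℝ) (s : ℝ), |s| ≤ C → |f s| ≤ α * C := by
    intro C s hs
    have h1 : |f s - f 0| ≤ α * |s - 0| := hf s 0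
    rw [hf0, sub_zero, sub_zero] at h1
    exact h1.trans (by have := hα.le; nlinarith [abs_nonneg s])
  -- integrability of the convolution integrand
  have hInt : ∀ (c : ℝ × ℝ → ℝ), Measurable c → ∀ (C : ℝ), (∀ y, |c y| ≤ C) →
      ∀ x : ℝ × ℝ, Integrable (fun y => ω (x - y) * f (c y)) := by
    intro c hc C hC x
    have h1 : Integrable (fun y => f (c y) * ω (x - y)) :=
      (hω.comp_sub_left x).bdd_mul (c := α * C)
        (hfl.continuous.measurable.comp hc).aestronglyMeasurable
        (Filter.Eventually.of_forall fun y => by simpa [Real.norm_eq_abs] using hfabs C (c y) (hC y))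
    simpa [mul_comm] using h1
  set k : ℝ := μ * α * (∫ x, |ω x|) with hk
  have hω0 : 0 ≤ ∫ x, |ω x| := integral_nonneg fun x => abs_nonneg _
  have hk0 : 0 ≤ k := by positivity
  -- main contraction estimate
  have step : ∀ (B : ℝ), (∀ y, |a y - b y| ≤ B) → ∀ x, |a x - b x| ≤ k * B := by
    intro B hB x
    have hIa := hInt a hma Ca hCa x
    have hIb := hInt b hmb Cb hCb x
    have e1 : a x - b x = μ * ∫ y, (ω (x - y) * f (a y) - ω (x - y) * f (b y)) := by
      rw [integral_sub hIa hIb, ha x, hb x]; ring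
    have e2 : ∀ y : ℝ × ℝ, ω (x - y) * f (a y) - ω (x - y) * f (b y)
        = ω (x - y) * (f (a y) - f (b y)) := fun y => by ring
    have hBnn : 0 ≤ B := le_trans (abs_nonneg _) (hB x)
    have key : |∫ y, (ω (x - y) * f (a y) - ω (x - y) * f (b y))|
        ≤ (∫ y, |ω y|) * (α * B) := by
      calc |∫ y, (ω (x - y) * f (a y) - ω (x - y) * f (b y))|
          ≤ ∫ y, |ω (x - y) * f (a y) - ω (x - y) * f (b y)| := by
            simpa [Real.norm_eq_abs] using
              norm_integral_le_integral_norm (fun y => ω (x - y) * f (a y) - ω (x - y) * f (b y))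
        _ ≤ ∫ y, |ω (x - y)| * (α * B) := by
            apply integral_mono (hIa.sub hIb).abs (((hω.comp_sub_left x).abs).mul_const _)
            intro y
            simp only [Pi.sub_apply]
            rw [e2 y, abs_mul]
            have h1 : |f (a y) - f (b y)| ≤ α * B :=
              (hf (a y) (b y)).trans
                (mul_le_mul_of_nonneg_left (hB y) hα.le)
            exact mul_le_mul_of_nonneg_left h1 (abs_nonneg _)
        _ = (∫ y : ℝ × ℝ, |ω (x - y)|) * (α * B) := integral_mul_const _ _
        _ = (∫ y, |ω y|) * (α * B) := by
            rw [integral_sub_left_eq_self (fun y => |ω y|) volume x]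
    rw [e1, abs_mul, abs_of_pos hμ]
    calc μ * |∫ y, (ω (x - y) * f (a y) - ω (x - y) * f (b y))|
        ≤ μ * ((∫ y, |ω y|) * (α * B)) := by
          exact mul_le_mul_of_nonneg_left key hμ.le
      _ = k * B := by rw [hk]; ring
  -- iterate
  have iter : ∀ (n : ℕ) (x : ℝ × ℝ), |a x - b x| ≤ k ^ n * (Ca + Cb) := by
    intro n
    induction n with
    | zero =>
      intro x
      rw [pow_zero, one_mul]
      calc |a x - b x| ≤ |a x| + |b x| := abs_sub _ _
        _ ≤ Ca + Cb := add_le_add (hCa x) (hCb x)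
    | succ n ih =>
      intro x
      have := step (k ^ n * (Ca + Cb)) ih x
      calc |a x - b x| ≤ k * (k ^ n * (Ca + Cb)) := this
        _ = k ^ (n + 1) * (Ca + Cb) := by ring
  intro x
  have hlim : Filter.Tendsto (fun n : ℕ => k ^ n * (Ca + Cb)) Filter.atTop (nhds 0) := by
    have h1 : Filter.Tendsto (fun n : ℕ => k ^ n) Filter.atTop (nhds 0) :=
      tendsto_pow_atTop_nhds_zero_of_lt_one hk0 hcontr
    simpa using h1.mul_const (Ca + Cb)
  have h2 : |a x - b x| ≤ 0 :=
    ge_of_tendsto' hlim fun n => iter n x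
  have := abs_nonneg (a x - b x)
  have h3 : a x - b x = 0 := by
    have : |a x - b x| = 0 := le_antisymm h2 this
    exact abs_eq_zero.mp this
  linarith

/-- The stationary solution associated with an input `I(x₁,x₂) = cos(2πλx₂)I₁(x₁)`
is (a.e.) `1/λ`-periodic and even with respect to `x₂`. -/
theorem stmt13 (lam α μ : ℝ) (hlam : 0 < lam) (hα : 0 < α) (hμ : 0 < μ)
    (f : ℝ → ℝ) (hf : ∀ s t, |f s - f t| ≤ α * |s - t|) (hf0 : f 0 = 0)
    (ω : ℝ × ℝ → ℝ) (hω : Integrable ω)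
    (hrad : ∀ p q : ℝ × ℝ, p.1 ^ 2 + p.2 ^ 2 = q.1 ^ 2 + q.2 ^ 2 → ω p = ω q)
    (hcontr : μ * α * (∫ x, |ω x|) < 1)
    (I₁ : ℝ → ℝ) (hI₁ : ∃ C, ∀ s, |I₁ s| ≤ C)
    (a : ℝ × ℝ → ℝ) (hameas : Measurable a) (habd : ∃ C, ∀ x, |a x| ≤ C)
    (ha : ∀ x : ℝ × ℝ, a x = Real.cos (2 * π * lam * x.2) * I₁ x.1
      + μ * ∫ y, ω (x - y) * f (a y)) :
    (∀ᵐ p : ℝ × ℝ, a (p.1, p.2 + 1 / lam) = a p) ∧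
    (∀ᵐ p : ℝ × ℝ, a (p.1, -p.2) = a p) := by
  obtain ⟨Ca, hCa⟩ := habd
  set g : ℝ × ℝ → ℝ := fun x => Real.cos (2 * π * lam * x.2) * I₁ x.1 with hg
  constructor
  · -- periodicity
    set c : ℝ × ℝ := (0, 1 / lam) with hc
    set b : ℝ × ℝ → ℝ := fun p => a (p + c) with hbdef
    have hmb : Measurable b := hameas.comp (measurable_id.add_const c)
    have hb : ∀ x : ℝ × ℝ, b x = g x + μ * ∫ y, ω (x - y) * f (b y) := by
      intro x
      have e0 : (x + c).1 = x.1 := by simp [hc]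
      have e0' : (x + c).2 = x.2 + 1 / lam := by simp [hc]
      have ecos : Real.cos (2 * π * lam * (x.2 + 1 / lam)) = Real.cos (2 * π * lam * x.2) := by
        have : 2 * π * lam * (x.2 + 1 / lam) = 2 * π * lam * x.2 + 2 * π := by
          field_simp
        rw [this, Real.cos_add_two_pi]
      have eint : (∫ y, ω (x + c - y) * f (a y)) = ∫ y, ω (x - y) * f (b y) := by
        have e1 : ∀ y : ℝ × ℝ, ω (x - y) * f (b y)
            = (fun z => ω (x + c - z) * f (a z)) (y + c) := by
          intro y
          simp only [hbdef]
          congr 2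
          abel
        calc (∫ y, ω (x + c - y) * f (a y))
            = ∫ y : ℝ × ℝ, (fun z => ω (x + c - z) * f (a z)) (y + c) :=
              (integral_add_right_eq_self (fun z => ω (x + c - z) * f (a z)) c).symm
          _ = ∫ y, ω (x - y) * f (b y) := by
              congr 1; funext y; exact (e1 y).symm
      calc b x = g (x + c) + μ * ∫ y, ω (x + c - y) * f (a y) := ha (x + c)
        _ = g x + μ * ∫ y, ω (x - y) * f (b y) := by
            rw [eint, hg]; simp only [e0, e0']; rw [ecos]
    have huniq := stmt13_unique α μ hα hμ f hf hf0 ω hω hcontr g b a hmb hameas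
      Ca (fun x => hCa _) Ca hCa hb ha
    apply Filter.Eventually.of_forall
    intro p
    have : (p.1, p.2 + 1 / lam) = p + c := by
      simp [hc, Prod.ext_iff]
    rw [this]
    exact huniq p
  · -- evenness
    set R : ℝ × ℝ → ℝ × ℝ := fun p => (p.1, -p.2) with hR
    set b : ℝ × ℝ → ℝ := fun p => a (R p) with hbdef
    have hmR : Measurable R := measurable_fst.prodMk measurable_snd.neg
    have hmb : Measurable b := hameas.comp hmR
    have hRmp : MeasurePreserving R volume volume :=
      (MeasurePreserving.id volume).prod (Measure.measurePreserving_neg volume)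
    have hRemb : MeasurableEmbedding R :=
      ((MeasurableEquiv.refl ℝ).prodCongr (MeasurableEquiv.neg ℝ)).measurableEmbedding
    have hb : ∀ x : ℝ × ℝ, b x = g x + μ * ∫ y, ω (x - y) * f (b y) := by
      intro x
      have ecos : Real.cos (2 * π * lam * (-x.2)) = Real.cos (2 * π * lam * x.2) := by
        rw [mul_neg, Real.cos_neg]
      have eint : (∫ y, ω (R x - y) * f (a y)) = ∫ y, ω (x - y) * f (b y) := by
        have e1 : ∀ y : ℝ × ℝ, ω (x - y) * f (b y)
            = (fun z => ω (R x - z) * f (a z)) (R y) := by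
          intro y
          simp only [hbdef]
          congr 1
          apply hrad
          simp [hR, Prod.fst_sub, Prod.snd_sub]
          ring
        calc (∫ y, ω (R x - y) * f (a y))
            = ∫ y : ℝ × ℝ, (fun z => ω (R x - z) * f (a z)) (R y) :=
              (hRmp.integral_comp hRemb _).symm
          _ = ∫ y, ω (x - y) * f (b y) := by
              congr 1; funext y; exact (e1 y).symm
      calc b x = g (R x) + μ * ∫ y, ω (R x - y) * f (a y) := ha (R x)
        _ = g x + μ * ∫ y, ω (x - y) * f (b y) := by
            rw [eint, hg]; simp only [hR]; rw [ecos]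
    have huniq := stmt13_unique α μ hα hμ f hf hf0 ω hω hcontr g b a hmb hameas
      Ca (fun x => hCa _) Ca hCa hb ha
    apply Filter.Eventually.of_forall
    intro p
    exact huniq p
end

section
/- Under the assumptions of the previous context (I(x₁,x₂) = cos(2πλx₂)I₁(x₁), ω radial in L¹(ℝ²), 0 < μ < μ₀), assume additionally that f is odd. Then the stationary solution a_I is 1/(2λ)-antiperiodic in x₂: a_I(x₁, x₂ + 1/(2λ)) = −a_I(x₁, x₂) for a.e. (x₁,x₂) ∈ ℝ². -/
open MeasureTheory Real

/-- For an odd response function, the stationary solution associated with the input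
`I(x₁,x₂) = cos(2πλx₂)I₁(x₁)` is (a.e.) `1/(2λ)`-antiperiodic in `x₂`. -/
theorem stmt14 (lam α μ : ℝ) (hlam : 0 < lam) (hα : 0 < α) (hμ : 0 < μ)
    (f : ℝ → ℝ) (hf : ∀ s t, |f s - f t| ≤ α * |s - t|) (hf0 : f 0 = 0)
    (hodd : ∀ s, f (-s) = -f s)
    (ω : ℝ × ℝ → ℝ) (hω : Integrable ω)
    (hrad : ∀ p q : ℝ × ℝ, p.1 ^ 2 + p.2 ^ 2 = q.1 ^ 2 + q.2 ^ 2 → ω p = ω q)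
    (hcontr : μ * α * (∫ x, |ω x|) < 1)
    (I₁ : ℝ → ℝ) (hI₁ : ∃ C, ∀ s, |I₁ s| ≤ C)
    (a : ℝ × ℝ → ℝ) (hameas : Measurable a) (habd : ∃ C, ∀ x, |a x| ≤ C)
    (ha : ∀ x : ℝ × ℝ, a x = Real.cos (2 * π * lam * x.2) * I₁ x.1
      + μ * ∫ y, ω (x - y) * f (a y)) :
    ∀ᵐ p : ℝ × ℝ, a (p.1, p.2 + 1 / (2 * lam)) = -a p := by
  set T : ℝ := 1 / (2 * lam) with hTdef
  obtain ⟨C, hC⟩ := habd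
  -- f is continuous (Lipschitz)
  have hfL : LipschitzWith ⟨α, hα.le⟩ f :=
    LipschitzWith.of_dist_le_mul (fun s t => by
      have := hf s t; rw [Real.dist_eq, Real.dist_eq]; exact this)
  have hfmeas : Measurable f := hfL.continuous.measurable
  have hfbd : ∀ s, |f s| ≤ α * |s| := fun s => by
    simpa [hf0] using hf s 0
  -- the shifted function
  set σ : ℝ × ℝ → ℝ × ℝ := fun y => (y.1, y.2 + T) with hσdef
  have hσmeas : Measurable σ := by
    exact (measurable_fst).prodMk (measurable_snd.add_const T)
  set g : ℝ × ℝ → ℝ := fun x => a (σ x) + a x with hgdef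
  have hgbd : ∀ x, |g x| ≤ C + C := fun x =>
    (abs_add_le _ _).trans (add_le_add (hC _) (hC _))
  have hbdd : BddAbove (Set.range fun x => |g x|) :=
    ⟨C + C, by rintro _ ⟨x, rfl⟩; exact hgbd x⟩
  set S : ℝ := ⨆ x, |g x| with hSdef
  have hS_le : ∀ x, |g x| ≤ S := fun x => le_ciSup hbdd x
  have hS0 : 0 ≤ S := le_trans (abs_nonneg _) (hS_le (0, 0))
  -- integrability helpers
  have hafσ : Measurable (fun y => f (a (σ y))) := hfmeas.comp (hameas.comp hσmeas)
  have haf : Measurable (fun y => f (a y)) := hfmeas.comp hameas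
  have hfabd : ∀ y : ℝ × ℝ, |f (a y)| ≤ α * C := fun y =>
    (hfbd _).trans (by have := hC y; nlinarith [abs_nonneg (a y)])
  have hfaσbd : ∀ y : ℝ × ℝ, |f (a (σ y))| ≤ α * C := fun y =>
    (hfbd _).trans (by have := hC (σ y); nlinarith [abs_nonneg (a (σ y))])
  have hint : ∀ (x : ℝ × ℝ) (b : ℝ × ℝ → ℝ) (D : ℝ), Measurable b → (∀ y, |b y| ≤ D) →
      Integrable (fun y => ω (x - y) * b y) := by
    intro x b D hb hbbd
    have h1 : Integrable (fun y => ω (x - y)) := hω.comp_sub_left x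
    have h2 := h1.bdd_mul hb.aestronglyMeasurable (c := D) (Filter.Eventually.of_forall fun y => by simpa using hbbd y)
    exact h2.congr (Filter.EventuallyEq.of_eq (funext fun y => mul_comm _ _))
  -- key identity: g x = μ * ∫ ω(x-y) * (f(a(σ y)) + f(a y))
  have hkey : ∀ x : ℝ × ℝ,
      g x = μ * ∫ y, ω (x - y) * (f (a (σ y)) + f (a y)) := by
    intro x
    have hcos : Real.cos (2 * π * lam * (σ x).2) = -Real.cos (2 * π * lam * x.2) := by
      have : 2 * π * lam * (σ x).2 = 2 * π * lam * x.2 + π := by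
        simp only [hσdef, hTdef]
        field_simp
      rw [this, Real.cos_add_pi]
    -- change of variables in the shifted integral
    have hsub : (∫ y, ω (σ x - y) * f (a y)) = ∫ y, ω (x - y) * f (a (σ y)) := by
      have := integral_add_right_eq_self (μ := volume) (fun y => ω (σ x - y) * f (a y)) ((0 : ℝ), T)
      rw [← this]
      congr 1
      funext y
      have h1 : σ x - (y + ((0 : ℝ), T)) = x - y := by
        simp [hσdef, Prod.ext_iff, Prod.sub_def, Prod.add_def]
      have h2 : y + ((0:ℝ), T) = σ y := by
        simp [hσdef, Prod.ext_iff, Prod.add_def]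
      rw [h1, h2]
    have e1 := ha (σ x)
    have e2 := ha x
    have : g x = μ * (∫ y, ω (x - y) * f (a (σ y))) + μ * ∫ y, ω (x - y) * f (a y) := by
      rw [hgdef]
      simp only [e1, e2, hcos, hsub]
      have : (σ x).1 = x.1 := rfl
      rw [this]; ring
    rw [this, ← mul_add, ← integral_add (hint x _ _ hafσ hfaσbd) (hint x _ _ haf hfabd)]
    congr 1
    exact integral_congr_ae (Filter.EventuallyEq.of_eq (funext fun y => by ring))
  -- bound: |g x| ≤ μ * α * ‖ω‖₁ * S
  have hbound : ∀ x : ℝ × ℝ, |g x| ≤ μ * α * (∫ z, |ω z|) * S := by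
    intro x
    rw [hkey x, abs_mul, abs_of_pos hμ]
    have hωx : Integrable (fun y => |ω (x - y)|) := (hω.comp_sub_left x).abs
    have hineq : |∫ y, ω (x - y) * (f (a (σ y)) + f (a y))| ≤
        ∫ y, |ω (x - y)| * (α * S) := by
      calc |∫ y, ω (x - y) * (f (a (σ y)) + f (a y))|
          ≤ ∫ y, |ω (x - y) * (f (a (σ y)) + f (a y))| := by
            simpa only [Real.norm_eq_abs] using
              norm_integral_le_integral_norm (μ := volume) (fun y => ω (x - y) * (f (a (σ y)) + f (a y)))
        _ ≤ ∫ y, |ω (x - y)| * (α * S) := by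
            apply integral_mono
            · exact ((hint x _ (α * C + α * C) (hafσ.add haf) (fun y => (abs_add_le _ _).trans
                (add_le_add (hfaσbd y) (hfabd y)))).abs)
            · exact hωx.mul_const _
            · intro y
              show |ω (x - y) * (f (a (σ y)) + f (a y))| ≤ |ω (x - y)| * (α * S)
              rw [abs_mul]
              apply mul_le_mul_of_nonneg_left _ (abs_nonneg _)
              have : f (a (σ y)) + f (a y) = f (a (σ y)) - f (-(a y)) := by
                rw [hodd]; ring
              rw [this]
              calc |f (a (σ y)) - f (-a y)| ≤ α * |a (σ y) - -a y| := hf _ _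
                _ = α * |g y| := by rw [hgdef]; ring_nf
                _ ≤ α * S := by nlinarith [hS_le y, hα.le]
    have heq : (∫ y, |ω (x - y)| * (α * S)) = (∫ z, |ω z|) * (α * S) := by
      rw [integral_mul_const]
      congr 1
      exact integral_sub_left_eq_self (fun z => |ω z|) volume x
    calc μ * |∫ y, ω (x - y) * (f (a (σ y)) + f (a y))| ≤ μ * ((∫ z, |ω z|) * (α * S)) := by
          rw [← heq]; exact mul_le_mul_of_nonneg_left hineq hμ.le
      _ = μ * α * (∫ z, |ω z|) * S := by ring
  -- contraction ⇒ S = 0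
  have hSle : S ≤ μ * α * (∫ z, |ω z|) * S := ciSup_le fun x => hbound x
  have hS_eq : S = 0 := by nlinarith
  have hg0 : ∀ x, g x = 0 := fun x =>
    abs_eq_zero.mp (le_antisymm (hS_eq ▸ hS_le x) (abs_nonneg _))
  refine Filter.Eventually.of_forall fun p => ?_
  have := hg0 p
  simp only [hgdef, hσdef] at this
  linarith
end

section
/- Let f be α-Lipschitz with f(0)=0, ω ∈ S(ℝ²), 0 < μ < μ₀ := 1/(α‖ω‖₁), and let I ∈ L^∞(ℝ²) be L_I-Lipschitz on an open set Ω ⊂ ℝ². Then the unique stationary solution a_I of a = I + μω∗f(a) is Lipschitz continuous on Ω with Lipschitz constant at most L_I + μ α ‖I‖_∞ (1 − μ/μ₀)^{−1} (‖∂_{x₁}ω‖₁² + ‖∂_{x₂}ω‖₁²)^{1/2}. -/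
open MeasureTheory

lemma ftc_pt (ω : ℝ × ℝ → ℝ) (ω' : ℝ × ℝ → ℝ × ℝ →L[ℝ] ℝ)
    (hω' : ∀ p, HasFDerivAt ω (ω' p) p) (hω'cont : Continuous ω') (v w : ℝ × ℝ) :
    ω (w + v) - ω w = ∫ t in (0:ℝ)..1, ω' (w + t • v) v := by
  have hc : ∀ t : ℝ, HasDerivAt (fun t : ℝ => ω (w + t • v)) (ω' (w + t • v) v) t := by
    intro t
    have hcurve : HasDerivAt (fun t : ℝ => w + t • v) v t :=
      by simpa using ((hasDerivAt_id t).smul_const v).const_add w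
    exact (hω' (w + t • v)).comp_hasDerivAt t hcurve
  have hcont : Continuous fun t : ℝ => ω' (w + t • v) v := by
    have : Continuous fun t : ℝ => w + t • v := by continuity
    exact (hω'cont.comp this).clm_apply continuous_const
  have := intervalIntegral.integral_eq_sub_of_hasDerivAt (f := fun t : ℝ => ω (w + t • v))
    (fun t _ => hc t) (hcont.intervalIntegrable 0 1)
  simpa using this.symm

lemma shiftA (ω : ℝ × ℝ → ℝ) (hωint : Integrable ω)
    (ω' : ℝ × ℝ → ℝ × ℝ →L[ℝ] ℝ) (hω' : ∀ p, HasFDerivAt ω (ω' p) p)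
    (hω'cont : Continuous ω') (v : ℝ × ℝ)
    (hiv : Integrable (fun w => |ω' w v|)) :
    ∫ w, |ω (w + v) - ω w| ≤ ∫ w, |ω' w v| := by
  have hΦcont : Continuous fun p : (ℝ × ℝ) × ℝ => |ω' (p.1 + p.2 • v) v| := by
    have h1 : Continuous fun p : (ℝ × ℝ) × ℝ => p.1 + p.2 • v :=
      continuous_fst.add (continuous_snd.smul continuous_const)
    exact ((hω'cont.comp h1).clm_apply continuous_const).abs
  -- pointwise bound
  have step1 : ∀ w : ℝ × ℝ, ENNReal.ofReal |ω (w + v) - ω w|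
      ≤ ∫⁻ t in Set.Ioc (0:ℝ) 1, ENNReal.ofReal |ω' (w + t • v) v| := by
    intro w
    have hcw : Continuous fun t : ℝ => |ω' (w + t • v) v| :=
      hΦcont.comp (Continuous.prodMk_right w)
    have hI : IntegrableOn (fun t : ℝ => |ω' (w + t • v) v|) (Set.Ioc 0 1) :=
      (hcw.integrableOn_Icc (a := 0) (b := 1)).mono_set Set.Ioc_subset_Icc_self
    have habs : |ω (w + v) - ω w| ≤ ∫ t in Set.Ioc (0:ℝ) 1, |ω' (w + t • v) v| := by
      rw [ftc_pt ω ω' hω' hω'cont v w]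
      calc |∫ t in (0:ℝ)..1, ω' (w + t • v) v|
          ≤ ∫ t in (0:ℝ)..1, |ω' (w + t • v) v| :=
            intervalIntegral.abs_integral_le_integral_abs zero_le_one
        _ = ∫ t in Set.Ioc (0:ℝ) 1, |ω' (w + t • v) v| :=
            intervalIntegral.integral_of_le zero_le_one
    calc ENNReal.ofReal |ω (w + v) - ω w|
        ≤ ENNReal.ofReal (∫ t in Set.Ioc (0:ℝ) 1, |ω' (w + t • v) v|) :=
          ENNReal.ofReal_le_ofReal habs
      _ ≤ ∫⁻ t in Set.Ioc (0:ℝ) 1, ENNReal.ofReal |ω' (w + t • v) v| :=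
          (ofReal_integral_eq_lintegral_ofReal hI
            (Filter.Eventually.of_forall fun t => abs_nonneg _)).le
  -- swap and translate
  have step2 : (∫⁻ w, ∫⁻ t in Set.Ioc (0:ℝ) 1, ENNReal.ofReal |ω' (w + t • v) v|)
      = ∫⁻ w, ENNReal.ofReal |ω' w v| := by
    rw [lintegral_lintegral_swap]
    · have : ∀ t : ℝ, (∫⁻ w, ENNReal.ofReal |ω' (w + t • v) v|)
          = ∫⁻ w, ENNReal.ofReal |ω' w v| := fun t =>
        lintegral_add_right_eq_self (fun w => ENNReal.ofReal |ω' w v|) (t • v)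
      simp only [this]
      rw [lintegral_const, Measure.restrict_apply MeasurableSet.univ, Set.univ_inter,
        Real.volume_Ioc]
      simp
    · exact (ENNReal.continuous_ofReal.comp hΦcont).measurable.aemeasurable
  -- conclude
  have hL : Integrable fun w => |ω (w + v) - ω w| :=
    ((hωint.comp_add_right v).sub hωint).abs
  have e1 : ∫ w, |ω (w + v) - ω w| = (∫⁻ w, ENNReal.ofReal |ω (w + v) - ω w|).toReal :=
    integral_eq_lintegral_of_nonneg_ae (Filter.Eventually.of_forall fun w => abs_nonneg _)
      hL.aestronglyMeasurable
  have e2 : ∫ w, |ω' w v| = (∫⁻ w, ENNReal.ofReal |ω' w v|).toReal :=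
    integral_eq_lintegral_of_nonneg_ae (Filter.Eventually.of_forall fun w => abs_nonneg _)
      hiv.aestronglyMeasurable
  rw [e1, e2]
  have hfin : (∫⁻ w, ENNReal.ofReal |ω' w v|) ≠ ⊤ := by
    have := hiv.hasFiniteIntegral
    rw [hasFiniteIntegral_iff_ofReal (Filter.Eventually.of_forall fun w => abs_nonneg _)] at this
    exact this.ne
  exact ENNReal.toReal_mono hfin (le_trans (lintegral_mono step1) step2.le)

lemma cauchy2 (a b c d : ℝ) (ha : 0 ≤ a) (hb : 0 ≤ b) (hc : 0 ≤ c) (hd : 0 ≤ d) :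
    a * c + b * d ≤ Real.sqrt (a ^ 2 + b ^ 2) * Real.sqrt (c ^ 2 + d ^ 2) := by
  rw [← Real.sqrt_mul (by positivity)]
  rw [show a * c + b * d = Real.sqrt ((a * c + b * d) ^ 2) from
    (Real.sqrt_sq (by positivity)).symm]
  apply Real.sqrt_le_sqrt
  nlinarith [sq_nonneg (a * d - b * c)]

/-- Lipschitz regularity of the stationary solution of the Amari-type equation on an
open set `Ω` where the input is Lipschitz, with the explicit Lipschitz constant
`L_I + μ α ‖I‖_∞ (1 − μ/μ₀)⁻¹ (‖∂₁ω‖₁² + ‖∂₂ω‖₁²)^{1/2}`. -/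
theorem stmt17 (f : ℝ → ℝ) (α : ℝ) (hα : 0 < α)
    (hf : ∀ s t, |f s - f t| ≤ α * |s - t|) (hf0 : f 0 = 0)
    (ω : ℝ × ℝ → ℝ) (hωint : Integrable ω)
    (ω' : ℝ × ℝ → ℝ × ℝ →L[ℝ] ℝ) (hω' : ∀ p, HasFDerivAt ω (ω' p) p)
    (hω'cont : Continuous ω')
    (hd1 : Integrable (fun p => ω' p (1, 0))) (hd2 : Integrable (fun p => ω' p (0, 1)))
    (μ : ℝ) (hμ : 0 < μ) (hcontr : μ * α * (∫ x, |ω x|) < 1)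
    (Ω : Set (ℝ × ℝ)) (hΩ : IsOpen Ω)
    (I : ℝ × ℝ → ℝ) (CI LI : ℝ) (hICI : ∀ x, |I x| ≤ CI)
    (hILip : ∀ x ∈ Ω, ∀ y ∈ Ω,
      |I x - I y| ≤ LI * Real.sqrt ((x.1 - y.1) ^ 2 + (x.2 - y.2) ^ 2))
    (a : ℝ × ℝ → ℝ) (hameas : Measurable a) (habd : ∃ C, ∀ x, |a x| ≤ C)
    (ha : ∀ x, a x = I x + μ * ∫ y, ω (x - y) * f (a y)) :
    ∀ x ∈ Ω, ∀ y ∈ Ω,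
      |a x - a y| ≤ (LI + μ * α * CI * (1 - μ * α * (∫ x, |ω x|))⁻¹
          * Real.sqrt ((∫ p, |ω' p (1, 0)|) ^ 2 + (∫ p, |ω' p (0, 1)|) ^ 2))
        * Real.sqrt ((x.1 - y.1) ^ 2 + (x.2 - y.2) ^ 2) := by
  intro x hx y hy
  set K : ℝ := ∫ x, |ω x| with hKdef
  have hK0 : 0 ≤ K := integral_nonneg fun _ => abs_nonneg _
  have hCI0 : 0 ≤ CI := (abs_nonneg _).trans (hICI 0)
  -- continuity of f
  have hfc : Continuous f := by
    have : LipschitzWith (Real.toNNReal α) f :=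
      LipschitzWith.of_dist_le_mul fun s t => by
        simpa [Real.dist_eq, Real.coe_toNNReal α hα.le] using hf s t
    exact this.continuous
  -- sup bound on a
  obtain ⟨C, hC⟩ := habd
  have hbdd : BddAbove (Set.range fun z => |a z|) := ⟨C, by rintro _ ⟨z, rfl⟩; exact hC z⟩
  set S : ℝ := ⨆ z, |a z| with hSdef
  have hS_le : ∀ z, |a z| ≤ S := fun z => le_ciSup hbdd z
  have hS0 : 0 ≤ S := (abs_nonneg _).trans (hS_le 0)
  have hfab : ∀ z, |f (a z)| ≤ α * S := fun z => by
    calc |f (a z)| = |f (a z) - f 0| := by rw [hf0, sub_zero]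
      _ ≤ α * |a z - 0| := hf _ _
      _ = α * |a z| := by rw [sub_zero]
      _ ≤ α * S := by nlinarith [hS_le z]
  have hg_meas : AEStronglyMeasurable (fun z => f (a z)) volume :=
    (hfc.measurable.comp hameas).aestronglyMeasurable
  -- integrability of the convolution integrand
  have hint : ∀ x : ℝ × ℝ, Integrable fun z => ω (x - z) * f (a z) := by
    intro x
    have := (hωint.comp_sub_left x).bdd_mul (c := α * S) hg_meas
      (Filter.Eventually.of_forall fun z => by simpa [Real.norm_eq_abs] using hfab z)
    simpa [mul_comm] using this
  -- bound on the convolution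
  have hωx_abs : ∀ x : ℝ × ℝ, (∫ z, |ω (x - z)|) = K :=
    fun x => integral_sub_left_eq_self (fun z => |ω z|) volume x
  have hconv_bd : ∀ x : ℝ × ℝ, |∫ z, ω (x - z) * f (a z)| ≤ α * S * K := by
    intro x
    calc |∫ z, ω (x - z) * f (a z)| ≤ ∫ z, |ω (x - z) * f (a z)| := by
          simpa only [Real.norm_eq_abs] using
            norm_integral_le_integral_norm (μ := volume) (fun z => ω (x - z) * f (a z))
      _ ≤ ∫ z, |ω (x - z)| * (α * S) := by
          apply integral_mono (hint x).abs ((hωint.comp_sub_left x).abs.mul_const _)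
          exact fun z => by
            simpa [abs_mul] using mul_le_mul_of_nonneg_left (hfab z) (abs_nonneg _)
      _ = K * (α * S) := by rw [integral_mul_const, hωx_abs]
      _ = α * S * K := by ring
  -- bound on S
  have hSle : S ≤ CI * (1 - μ * α * K)⁻¹ := by
    have h1 : S ≤ CI + μ * α * K * S := by
      apply ciSup_le
      intro z
      calc |a z| = |I z + μ * ∫ w, ω (z - w) * f (a w)| := by rw [← ha z]
        _ ≤ |I z| + |μ * ∫ w, ω (z - w) * f (a w)| := abs_add_le _ _
        _ ≤ CI + μ * (α * S * K) := by
            refine add_le_add (hICI z) ?_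
            rw [abs_mul, abs_of_pos hμ]
            exact mul_le_mul_of_nonneg_left (hconv_bd z) hμ.le
        _ = CI + μ * α * K * S := by ring
    have h2 : 0 < 1 - μ * α * K := by linarith
    rw [← div_eq_mul_inv, le_div_iff₀ h2]
    nlinarith
  have h2 : 0 < 1 - μ * α * K := by linarith
  -- set up constants
  set D1 : ℝ := ∫ p, |ω' p (1, 0)| with hD1def
  set D2 : ℝ := ∫ p, |ω' p (0, 1)| with hD2def
  have hD10 : 0 ≤ D1 := integral_nonneg fun _ => abs_nonneg _
  have hD20 : 0 ≤ D2 := integral_nonneg fun _ => abs_nonneg _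
  set v : ℝ × ℝ := x - y with hvdef
  set d : ℝ := Real.sqrt ((x.1 - y.1) ^ 2 + (x.2 - y.2) ^ 2) with hddef
  have hd0 : 0 ≤ d := Real.sqrt_nonneg _
  set SD : ℝ := Real.sqrt (D1 ^ 2 + D2 ^ 2) with hSDdef
  have hSD0 : 0 ≤ SD := Real.sqrt_nonneg _
  -- decomposition of the derivative
  have hdecomp : ∀ w : ℝ × ℝ, ω' w v = v.1 * ω' w (1, 0) + v.2 * ω' w (0, 1) := by
    intro w
    have hv : v = v.1 • ((1 : ℝ), (0 : ℝ)) + v.2 • ((0 : ℝ), (1 : ℝ)) := by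
      ext <;> simp
    calc ω' w v = ω' w (v.1 • ((1 : ℝ), (0 : ℝ)) + v.2 • ((0 : ℝ), (1 : ℝ))) := by
          rw [← hv]
      _ = v.1 * ω' w (1, 0) + v.2 * ω' w (0, 1) := by
          rw [map_add, _root_.map_smul, _root_.map_smul, smul_eq_mul, smul_eq_mul]
  have hωv_meas : Continuous fun w : ℝ × ℝ => |ω' w v| :=
    (hω'cont.clm_apply continuous_const).abs
  have hiv : Integrable fun w : ℝ × ℝ => |ω' w v| := by
    apply Integrable.mono' ((hd1.abs.const_mul |v.1|).add (hd2.abs.const_mul |v.2|))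
      hωv_meas.aestronglyMeasurable
    refine Filter.Eventually.of_forall fun w => ?_
    simp only [Pi.add_apply, Real.norm_eq_abs, abs_abs]
    rw [hdecomp w]
    calc |v.1 * ω' w (1, 0) + v.2 * ω' w (0, 1)|
        ≤ |v.1 * ω' w (1, 0)| + |v.2 * ω' w (0, 1)| := abs_add_le _ _
      _ = |v.1| * |ω' w (1, 0)| + |v.2| * |ω' w (0, 1)| := by rw [abs_mul, abs_mul]
  -- bound on ∫ |ω' w v|
  have hivbd : (∫ w, |ω' w v|) ≤ d * SD := by
    have step : (∫ w, |ω' w v|) ≤ |v.1| * D1 + |v.2| * D2 := by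
      calc (∫ w, |ω' w v|)
          ≤ ∫ w, (|v.1| * |ω' w (1, 0)| + |v.2| * |ω' w (0, 1)|) := by
            apply integral_mono hiv ((hd1.abs.const_mul _).add (hd2.abs.const_mul _))
            intro w
            show |ω' w v| ≤ |v.1| * |ω' w (1, 0)| + |v.2| * |ω' w (0, 1)|
            rw [hdecomp w]
            calc |v.1 * ω' w (1, 0) + v.2 * ω' w (0, 1)|
                ≤ |v.1 * ω' w (1, 0)| + |v.2 * ω' w (0, 1)| := abs_add_le _ _
              _ = |v.1| * |ω' w (1, 0)| + |v.2| * |ω' w (0, 1)| := by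
                  rw [abs_mul, abs_mul]
        _ = |v.1| * D1 + |v.2| * D2 := by
            rw [integral_add (hd1.abs.const_mul _) (hd2.abs.const_mul _),
              integral_const_mul, integral_const_mul]
    have hcs : |v.1| * D1 + |v.2| * D2 ≤ d * SD := by
      have hd_eq : d = Real.sqrt (|v.1| ^ 2 + |v.2| ^ 2) := by
        rw [hddef, sq_abs, sq_abs]
        norm_num [hvdef]
      rw [hd_eq]
      exact cauchy2 _ _ _ _ (abs_nonneg _) (abs_nonneg _) hD10 hD20
    linarith
  -- translation estimate for ω differences
  have hωdiff_int : Integrable fun z => |ω (x - z) - ω (y - z)| :=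
    ((hωint.comp_sub_left x).sub (hωint.comp_sub_left y)).abs
  have htrans : (∫ z, |ω (x - z) - ω (y - z)|) ≤ d * SD := by
    have hxz : ∀ z : ℝ × ℝ, x - z = (y - z) + v := fun z => by
      rw [hvdef]; abel
    have heq : (∫ z, |ω (x - z) - ω (y - z)|) = ∫ w, |ω (w + v) - ω w| := by
      have : (fun z => |ω (x - z) - ω (y - z)|)
          = fun z => (fun w => |ω (w + v) - ω w|) (y - z) := by
        funext z; rw [hxz z]
      rw [this]
      exact integral_sub_left_eq_self (fun w => |ω (w + v) - ω w|) volume y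
    rw [heq]
    exact le_trans (shiftA ω hωint ω' hω' hω'cont v hiv) hivbd
  -- difference of convolutions
  have hBdiff : |(∫ z, ω (x - z) * f (a z)) - ∫ z, ω (y - z) * f (a z)|
      ≤ d * SD * (α * S) := by
    have e1 : (∫ z, ω (x - z) * f (a z)) - (∫ z, ω (y - z) * f (a z))
        = ∫ z, (ω (x - z) - ω (y - z)) * f (a z) := by
      rw [← integral_sub (hint x) (hint y)]
      congr 1; funext z; ring
    rw [e1]
    have hint_diff : Integrable fun z => (ω (x - z) - ω (y - z)) * f (a z) :=
      ((hint x).sub (hint y)).congr (Filter.Eventually.of_forall fun z => by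
        simp only [Pi.sub_apply]; ring)
    calc |∫ z, (ω (x - z) - ω (y - z)) * f (a z)|
        ≤ ∫ z, |(ω (x - z) - ω (y - z)) * f (a z)| := by
          simpa only [Real.norm_eq_abs] using
            norm_integral_le_integral_norm (μ := volume) (fun z => (ω (x - z) - ω (y - z)) * f (a z))
      _ ≤ ∫ z, |ω (x - z) - ω (y - z)| * (α * S) := by
          apply integral_mono hint_diff.abs (hωdiff_int.mul_const _)
          exact fun z => by
            simpa [abs_mul] using mul_le_mul_of_nonneg_left (hfab z) (abs_nonneg _)
      _ = (∫ z, |ω (x - z) - ω (y - z)|) * (α * S) := integral_mul_const _ _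
      _ ≤ d * SD * (α * S) := by
          apply mul_le_mul_of_nonneg_right htrans (by positivity)
  -- final combination
  have hfinal : |a x - a y| ≤ LI * d + μ * (d * SD * (α * S)) := by
    have e : a x - a y = (I x - I y)
        + μ * ((∫ z, ω (x - z) * f (a z)) - ∫ z, ω (y - z) * f (a z)) := by
      rw [ha x, ha y]; ring
    rw [e]
    calc |(I x - I y) + μ * ((∫ z, ω (x - z) * f (a z)) - ∫ z, ω (y - z) * f (a z))|
        ≤ |I x - I y| + |μ * ((∫ z, ω (x - z) * f (a z)) - ∫ z, ω (y - z) * f (a z))| :=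
          abs_add_le _ _
      _ ≤ LI * d + μ * (d * SD * (α * S)) := by
          refine add_le_add (hILip x hx y hy) ?_
          rw [abs_mul, abs_of_pos hμ]
          exact mul_le_mul_of_nonneg_left hBdiff hμ.le
  refine le_trans hfinal ?_
  have hmul : μ * (d * SD * (α * S)) ≤ μ * α * CI * (1 - μ * α * K)⁻¹ * SD * d := by
    have h3 : 0 ≤ (1 - μ * α * K)⁻¹ := by positivity
    nlinarith [mul_nonneg (mul_nonneg (mul_nonneg hμ.le hα.le) hSD0) hd0,
      mul_nonneg (mul_nonneg hμ.le hα.le) (mul_nonneg hSD0 hd0)]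
  nlinarith [hmul]
end
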